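/- Let G be a finite digraph on vertex set V with directly observable subset D, satisfying P1 and P2. Define the pointing relation v ↦ w iff v ≠ w and N_in(w) = {v}. Then for every non-directly observable vertex v there exists a finite pointing chain v = u_0 ↦ u_1 ↦ ⋯ ↦ u_q with u_q ∈ D. -/

import Mathlib

/-- `v` points to `w`: v ≠ w and the in-neighborhood of w is exactly {v}. -/
def pointsTo {V : Type} (E : V → V → Prop) (v w : V) : Prop :=
  v ≠ w ∧ {u | E u w} = {v}

section Aux

variable {V : Type} (E : V → V → Prop) (D : Set V)

/-- `v` has a pointing chain to `D`. -/
def hasCh (v : V) : Prop :=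
  ∃ (q : ℕ) (u : ℕ → V), u 0 = v ∧ (∀ t < q, pointsTo E (u t) (u (t + 1))) ∧ u q ∈ D

lemma hasCh_of_mem {v : V} (hv : v ∈ D) : hasCh E D v :=
  ⟨0, fun _ => v, rfl, fun t ht => absurd ht (Nat.not_lt_zero t), hv⟩

lemma hasCh_step {v w : V} (hpt : pointsTo E v w) (hw : hasCh E D w) : hasCh E D v := by
  obtain ⟨q, u, hu0, hch, huq⟩ := hw
  refine ⟨q + 1, fun n => if n = 0 then v else u (n - 1), rfl, ?_, by simp [huq]⟩
  intro t ht
  rcases Nat.eq_zero_or_pos t with h0 | hpos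
  · subst h0; simpa [hu0] using hpt
  · have h1 : t - 1 < q := by omega
    have h2 := hch (t - 1) h1
    have ht0 : t ≠ 0 := by omega
    simpa [ht0, show t - 1 + 1 = t by omega] using h2

lemma pointsTo_unique {a b z : V} (h1 : pointsTo E a z) (h2 : pointsTo E b z) : a = b := by
  have h : ({a} : Set V) = {b} := h1.2.symm.trans h2.2
  simpa [Set.singleton_eq_singleton_iff] using h

end Aux

/-- In a finite digraph satisfying P1 and P2, every non-directly-observable vertex has
a finite pointing chain ending at a directly observable vertex. -/
theorem pointing_chain_to_observable (V : Type) [Fintype V]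
    (E : V → V → Prop) (D : Set V)
    (hP1 : ∀ v ∉ D, ∃ w, pointsTo E v w)
    (hP2 : ∀ (ℓ : ℕ) (c : Fin (ℓ + 1) → V), Function.Injective c →
      (∀ t, c t ∉ D) → (∀ t, E (c t) (c (t + 1))) →
      ∃ (t : Fin (ℓ + 1)) (w : V), w ∉ Set.range c ∧ {u | E u w} = {c t}) :
    ∀ v ∉ D, ∃ (q : ℕ) (u : ℕ → V), u 0 = v ∧
      (∀ t < q, pointsTo E (u t) (u (t + 1))) ∧ u q ∈ D := by
  classical
  intro v0 hv0D
  by_contra hc0'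
  have hc0 : ¬ hasCh E D v0 := hc0'
  set B : V → Prop := fun v => ¬ hasCh E D v with hBdef
  have hBnotD : ∀ v, B v → v ∉ D := fun v hv hvD => hv (hasCh_of_mem E D hvD)
  have hBcl : ∀ v w, B v → pointsTo E v w → B w := fun v w hv hpt hw => hv (hasCh_step E D hpt hw)
  have hBpt : ∀ v, B v → ∃ w, pointsTo E v w ∧ B w := by
    intro v hv
    obtain ⟨w, hw⟩ := hP1 v (hBnotD v hv)
    exact ⟨w, hw, hBcl v w hv hw⟩
  set good : (V → V) → Prop := fun f => ∀ v, B v → pointsTo E v (f v) ∧ B (f v) with hgooddef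
  have hexg : ∃ f, good f := by
    refine ⟨fun v => if h : B v then Classical.choose (hBpt v h) else v, ?_⟩
    intro v hv
    simp only [dif_pos hv]
    exact ⟨(Classical.choose_spec (hBpt v hv)).1, (Classical.choose_spec (hBpt v hv)).2⟩
  set perB : (V → V) → Finset V := fun f =>
    Finset.univ.filter (fun v => B v ∧ ∃ n, 0 < n ∧ f^[n] v = v) with hperBdef
  have hexn : ∃ n, ∃ f, good f ∧ (perB f).card = n :=
    ⟨_, hexg.choose, hexg.choose_spec, rfl⟩
  obtain ⟨f, hgood, hfcard⟩ := Nat.find_spec hexn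
  have hmin : ∀ g, good g → Nat.find hexn ≤ (perB g).card := by
    intro g hg
    by_contra h
    exact absurd ⟨g, hg, rfl⟩ (Nat.find_min hexn (lt_of_not_ge h))
  -- orbit of v0 under f stays in B
  have horb : ∀ n, B (f^[n] v0) := by
    intro n
    induction n with
    | zero => exact hc0
    | succ n ih => rw [Function.iterate_succ_apply']; exact (hgood _ ih).2
  -- find a periodic point in B
  have key : ∀ a b : ℕ, a < b → (f^[a] v0 = f^[b] v0) →
      ∃ x, B x ∧ ∃ n, 0 < n ∧ f^[n] x = x := by
    intro a b hab he
    refine ⟨f^[a] v0, horb a, b - a, by omega, ?_⟩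
    rw [← Function.iterate_add_apply, show b - a + a = b by omega]
    exact he.symm
  obtain ⟨x, hxB, hxper⟩ : ∃ x, B x ∧ ∃ n, 0 < n ∧ f^[n] x = x := by
    obtain ⟨i, j, hij, hije⟩ := Finite.exists_ne_map_eq_of_infinite (fun n : ℕ => f^[n] v0)
    rcases hij.lt_or_gt with h | h
    · exact key i j h hije
    · exact key j i h hije.symm
  set m := Nat.find hxper with hmdef
  have hm : 0 < m ∧ f^[m] x = x := Nat.find_spec hxper
  have hmmin : ∀ k, k < m → ¬(0 < k ∧ f^[k] x = x) := fun k hk => Nat.find_min hxper hk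
  have hxorb : ∀ n, B (f^[n] x) := by
    intro n
    induction n with
    | zero => exact hxB
    | succ n ih => rw [Function.iterate_succ_apply']; exact (hgood _ ih).2
  set ℓ := m - 1 with hldef
  have hℓ : ℓ + 1 = m := by omega
  set c : Fin (ℓ + 1) → V := fun t => f^[t.val] x with hcdef
  have hcB : ∀ t, B (c t) := fun t => hxorb t.val
  have hcD : ∀ t, c t ∉ D := fun t => hBnotD _ (hcB t)
  have hcsucc : ∀ t, c (t + 1) = f (c t) := by
    intro t
    rcases eq_or_ne t (Fin.last ℓ) with h | h
    · subst h
      have h1 : (Fin.last ℓ + 1 : Fin (ℓ + 1)) = 0 := by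
        rw [Fin.last_add_one]
      rw [h1]
      show f^[0] x = f (f^[ℓ] x)
      rw [← Function.iterate_succ_apply' f ℓ x, Nat.succ_eq_add_one, hℓ, hm.2]
      simp
    · have h1 : (t + 1).val = t.val + 1 := by
        rw [Fin.val_add_one]
        simp [h]
      show f^[(t + 1).val] x = f (f^[t.val] x)
      rw [h1, Function.iterate_succ_apply']
  have hcinj : Function.Injective c := by
    have key2 : ∀ a b : Fin (ℓ + 1), a.val < b.val → c a ≠ c b := by
      intro a b h hceq
      have hblt : b.val < m := by have := b.isLt; omega
      have h1 : f^[m - b.val + a.val] x = x := by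
        rw [Function.iterate_add_apply]
        show f^[m - b.val] (c a) = x
        rw [hceq]
        show f^[m - b.val] (f^[b.val] x) = x
        rw [← Function.iterate_add_apply, show m - b.val + b.val = m by omega, hm.2]
      exact hmmin (m - b.val + a.val) (by omega) ⟨by omega, h1⟩
    intro a b hab
    rcases lt_trichotomy a.val b.val with h | h | h
    · exact absurd hab (key2 a b h)
    · exact Fin.ext h
    · exact absurd hab.symm (key2 b a h)
  have hEc : ∀ t, E (c t) (c (t + 1)) := by
    intro t
    rw [hcsucc t]
    have h := (hgood (c t) (hcB t)).1.2
    exact (Set.ext_iff.mp h (c t)).mpr rfl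
  obtain ⟨t, w, hwr, hEw⟩ := hP2 ℓ c hcinj hcD hEc
  have hwt : c t ≠ w := fun h => hwr ⟨t, h⟩
  have hptw : pointsTo E (c t) w := ⟨hwt, hEw⟩
  have hwB : B w := hBcl _ _ (hcB t) hptw
  set f' := Function.update f (c t) w with hf'
  have hgood' : good f' := by
    intro v hv
    rcases eq_or_ne v (c t) with h | h
    · subst h
      rw [hf', Function.update_self]
      exact ⟨hptw, hwB⟩
    · rw [hf', Function.update_of_ne h]
      exact hgood v hv
  -- the f'-orbit of a bad vertex outside the cycle never enters the cycle
  have hL1 : ∀ y, B y → y ∉ Set.range c → f' y ∉ Set.range c := by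
    intro y hyB hyr hmem
    obtain ⟨s, hs⟩ := hmem
    have hyt : y ≠ c t := fun h => hyr ⟨t, h.symm⟩
    have hfy : f' y = f y := Function.update_of_ne hyt _ _
    have hpt1 : pointsTo E y (c s) := by
      rw [hs, hfy]; exact (hgood y hyB).1
    have hpt2 : pointsTo E (c (s - 1)) (c s) := by
      have h := (hgood (c (s - 1)) (hcB (s - 1))).1
      rw [← hcsucc (s - 1)] at h
      have h2 : (s - 1) + 1 = s := sub_add_cancel s 1
      rwa [h2] at h
    have heq : y = c (s - 1) := pointsTo_unique E hpt1 hpt2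
    exact hyr ⟨s - 1, heq.symm⟩
  have hstay : ∀ y, B y → y ∉ Set.range c → ∀ k,
      f'^[k] y ∉ Set.range c ∧ B (f'^[k] y) := by
    intro y hy hyr k
    induction k with
    | zero => exact ⟨hyr, hy⟩
    | succ k ih =>
      rw [Function.iterate_succ_apply']
      exact ⟨hL1 _ ih.2 ih.1, (hgood' _ ih.2).2⟩
  -- no vertex on the cycle is f'-periodic
  have hnotper : ∀ v, v ∈ Set.range c → ¬ (∃ n, 0 < n ∧ f'^[n] v = v) := by
    rintro v ⟨s, rfl⟩ ⟨n, hn, hvn⟩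
    set k0 := ((t - s : Fin (ℓ + 1))).val with hk0
    have hk0lt : k0 < ℓ + 1 := (t - s).isLt
    open Fin.NatCast Fin.CommRing in
    have hclaim : ∀ k, k ≤ k0 → f'^[k] (c s) = c (s + (k : Fin (ℓ + 1))) := by
      intro k hk
      induction k with
      | zero => simp
      | succ k ih =>
        have hk' : k ≤ k0 := by omega
        have hne : s + (k : Fin (ℓ + 1)) ≠ t := by
          intro he
          have hkm : k < ℓ + 1 := by omega
          have hv : ((k : Fin (ℓ + 1))).val = k := Fin.val_cast_of_lt hkm
          have h2 : (k : Fin (ℓ + 1)) = t - s := by rw [← he]; ring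
          rw [h2] at hv
          omega
        rw [Function.iterate_succ_apply', ih hk', hf',
          Function.update_of_ne (fun h => hne (hcinj h))]
        have h3 := (hcsucc (s + (k : Fin (ℓ + 1)))).symm
        rw [h3]
        congr 1
        push_cast
        ring
    open Fin.NatCast Fin.CommRing in
    have hct : f'^[k0] (c s) = c t := by
      rw [hclaim k0 le_rfl]
      congr 1
      have h4 : ((k0 : ℕ) : Fin (ℓ + 1)) = t - s := by
        rw [hk0]; exact Fin.cast_val_eq_self _
      rw [h4]; ring
    have hw1 : f'^[k0 + 1] (c s) = w := by
      rw [Function.iterate_succ_apply', hct, hf', Function.update_self]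
    have hout : ∀ j, f'^[(k0 + 1) + j] (c s) ∉ Set.range c := by
      intro j
      have heq : f'^[(k0 + 1) + j] (c s) = f'^[j] w := by
        rw [add_comm (k0 + 1) j, Function.iterate_add_apply, hw1]
      rw [heq]
      exact (hstay w hwB hwr j).1
    have hmult : ∀ q, f'^[n * q] (c s) = c s := by
      intro q
      induction q with
      | zero => simp
      | succ q ih => rw [Nat.mul_succ, Function.iterate_add_apply, hvn, ih]
    have hge : k0 + 1 ≤ n * (k0 + 1) := Nat.le_mul_of_pos_left _ hn
    have hcon := hout (n * (k0 + 1) - (k0 + 1))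
    rw [show (k0 + 1) + (n * (k0 + 1) - (k0 + 1)) = n * (k0 + 1) by omega,
      hmult (k0 + 1)] at hcon
    exact hcon ⟨s, rfl⟩
  have hsubset : perB f' ⊆ perB f := by
    intro v hv
    simp only [hperBdef, Finset.mem_filter, Finset.mem_univ, true_and] at hv ⊢
    obtain ⟨hvB, n, hn, hvn⟩ := hv
    have hvr : v ∉ Set.range c := fun h => hnotper v h ⟨n, hn, hvn⟩
    have hagree : ∀ k, f'^[k] v = f^[k] v ∧ f'^[k] v ∉ Set.range c ∧ B (f'^[k] v) := by
      intro k
      induction k with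
      | zero => exact ⟨rfl, hvr, hvB⟩
      | succ k ih =>
        obtain ⟨h1, h2, h3⟩ := ih
        have hne : f'^[k] v ≠ c t := fun h => h2 ⟨t, h.symm⟩
        refine ⟨?_, ?_, ?_⟩
        · rw [Function.iterate_succ_apply', Function.iterate_succ_apply',
            hf', Function.update_of_ne hne, h1]
        · rw [Function.iterate_succ_apply']; exact hL1 _ h3 h2
        · rw [Function.iterate_succ_apply']; exact (hgood' _ h3).2
      
    exact ⟨hvB, n, hn, by rw [← (hagree n).1]; exact hvn⟩
  have hxin : x ∈ perB f := by
    simp only [hperBdef, Finset.mem_filter, Finset.mem_univ, true_and]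
    exact ⟨hxB, m, hm.1, hm.2⟩
  have hxnot : x ∉ perB f' := by
    simp only [hperBdef, Finset.mem_filter, Finset.mem_univ, true_and]
    rintro ⟨-, hp⟩
    exact hnotper x ⟨0, rfl⟩ hp
  have hlt : (perB f').card < (perB f).card :=
    Finset.card_lt_card ((Finset.ssubset_iff_of_subset hsubset).mpr ⟨x, hxin, hxnot⟩)
  have h1 := hmin f' hgood'
  omega
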